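/- Let N ≥ 1 and let h be a natural number with N + 2h ≠ 2. Let P be a polynomial over ℝ in N variables (MvPolynomial (Fin N) ℝ) which is homogeneous of degree h and formally harmonic. Then for each j: (a) the polynomial pderiv j P is homogeneous of degree h−1 (it is zero when h = 0) and formally harmonic; and (b) the polynomial X_j·P + (1/(2 − N − 2h))·(Σ_{i} X_i²)·pderiv j P is homogeneous of degree h+1 and formally harmonic. -/

import Mathlib

open MvPolynomial

variable {σ : Type*} [Fintype σ] [DecidableEq σ]

lemma degree_eq_sum_univ (d : σ →₀ ℕ) : d.degree = ∑ i : σ, d i :=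
  Finset.sum_subset (Finset.subset_univ _) (fun i _ hi => Finsupp.notMem_support_iff.mp hi)

lemma my_pderiv_isHomogeneous {n : ℕ} {P : MvPolynomial σ ℝ} (hP : P.IsHomogeneous n) (j : σ) :
    (pderiv j P).IsHomogeneous (n - 1) := by
  conv_lhs => rw [← P.support_sum_monomial_coeff]
  rw [map_sum]
  apply MvPolynomial.IsHomogeneous.sum
  intro d hd
  rw [pderiv_monomial]
  by_cases hdj : d j = 0
  · rw [hdj]; norm_num; exact isHomogeneous_zero _ _ _
  · apply isHomogeneous_monomial
    have hdeg : d.degree = n := by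
      rw [Finsupp.degree_eq_weight_one]; exact hP (Finsupp.mem_support_iff.mp hd)
    have he : (d - Finsupp.single j 1) + Finsupp.single j 1 = d := by
      ext k
      by_cases hk : k = j
      · subst hk
        simp only [Finsupp.add_apply, Finsupp.tsub_apply, Finsupp.single_eq_same]
        omega
      · simp [Finsupp.single_apply, Ne.symm hk]
    have hthis := congrArg Finsupp.degree he
    simp only [degree_eq_sum_univ, Finsupp.add_apply, Finset.sum_add_distrib] at hthis ⊢
    have hsing : ∑ i : σ, (Finsupp.single j 1) i = 1 := by
      simp [Finsupp.single_apply]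
    rw [degree_eq_sum_univ] at hdeg
    omega

lemma euler_monomial (d : σ →₀ ℕ) (c : ℝ) :
    ∑ i : σ, X i * pderiv i (monomial d c) = (d.degree : ℝ) • monomial d c := by
  have key : ∀ i : σ, X i * pderiv i (monomial d c) = (d i : ℝ) • (monomial d c) := by
    intro i
    rw [pderiv_monomial]
    by_cases hdi : d i = 0
    · simp [hdi]
    · have hfs : Finsupp.single i 1 + (d - Finsupp.single i 1) = d := by
        ext k
        by_cases hk : k = i
        · subst hk
          simp only [Finsupp.add_apply, Finsupp.tsub_apply, Finsupp.single_eq_same]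
          omega
        · simp [Finsupp.single_apply, Ne.symm hk]
      rw [X, monomial_mul, one_mul, hfs, smul_monomial, smul_eq_mul, mul_comm]
  simp_rw [key, ← Finset.sum_smul]
  congr 1
  rw [degree_eq_sum_univ]
  push_cast
  rfl

lemma my_euler {n : ℕ} {P : MvPolynomial σ ℝ} (hP : P.IsHomogeneous n) :
    ∑ i : σ, X i * pderiv i P = (n : ℝ) • P := by
  calc ∑ i : σ, X i * pderiv i P
      = ∑ i : σ, X i * pderiv i (∑ d ∈ P.support, monomial d (coeff d P)) := by
        rw [P.support_sum_monomial_coeff]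
    _ = ∑ d ∈ P.support, ∑ i : σ, X i * pderiv i (monomial d (coeff d P)) := by
        simp_rw [map_sum, Finset.mul_sum]
        rw [Finset.sum_comm]
    _ = ∑ d ∈ P.support, (n : ℝ) • monomial d (coeff d P) := by
        refine Finset.sum_congr rfl fun d hd => ?_
        rw [euler_monomial]
        congr 2
        rw [Finsupp.degree_eq_weight_one]
        exact hP (Finsupp.mem_support_iff.mp hd)
    _ = (n : ℝ) • P := by rw [← Finset.smul_sum, P.support_sum_monomial_coeff]

lemma my_pderiv_comm (i j : σ) (p : MvPolynomial σ ℝ) :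
    pderiv i (pderiv j p) = pderiv j (pderiv i p) := by
  induction p using MvPolynomial.induction_on with
  | C => simp
  | add p q hp hq => simp [hp, hq]
  | mul_X p k hp =>
      simp only [pderiv_mul, map_add, hp, pderiv_X]
      by_cases hik : i = k <;> by_cases hjk : j = k <;>
        simp [hik, hjk, Pi.single_apply] <;> ring

lemma lap_mul (f g : MvPolynomial σ ℝ) (i : σ) :
    pderiv i (pderiv i (f * g)) =
      pderiv i (pderiv i f) * g + 2 * (pderiv i f * pderiv i g) + f * pderiv i (pderiv i g) := by
  simp only [pderiv_mul, map_add]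
  ring

lemma pderiv_sq_sum (i : σ) :
    pderiv i (∑ k : σ, (X k : MvPolynomial σ ℝ) ^ 2) = 2 * X i := by
  rw [map_sum, Finset.sum_eq_single i]
  · simp [pderiv_pow]
  · intro k _ hk
    simp [pderiv_pow, pderiv_X_of_ne hk]
  · simp

/-- `P` is formally harmonic: `Σ_i ∂_i ∂_i P = 0`. -/
def IsFormallyHarmonicReal {N : ℕ} (P : MvPolynomial (Fin N) ℝ) : Prop :=
  ∑ i : Fin N, pderiv i (pderiv i P) = 0

/-- the harmonic decomposition
`x_j·𝒴_h = (x_j𝒴_h + |x|²∂_{x_j}𝒴_h/(1−n−2h)) − |x|²∂_{x_j}𝒴_h/(1−n−2h)`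
into harmonic homogeneous parts of degrees `h+1` and `h−1` (with `N = n+1`). -/
theorem stmt_5 (N : ℕ) (hN : 1 ≤ N) (h : ℕ) (hNh : N + 2 * h ≠ 2)
    (P : MvPolynomial (Fin N) ℝ)
    (hhom : P.IsHomogeneous h) (hharm : IsFormallyHarmonicReal P) (j : Fin N) :
    ((pderiv j P).IsHomogeneous (h - 1) ∧
      (h = 0 → pderiv j P = 0) ∧
      IsFormallyHarmonicReal (pderiv j P)) ∧
    ((X j * P +
        C (1 / (2 - (N : ℝ) - 2 * h)) * (∑ i : Fin N, X i ^ 2) * pderiv j P).IsHomogeneous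
        (h + 1) ∧
      IsFormallyHarmonicReal
        (X j * P +
          C (1 / (2 - (N : ℝ) - 2 * h)) * (∑ i : Fin N, X i ^ 2) * pderiv j P)) := by
  have hharm' : ∑ i : Fin N, pderiv i (pderiv i P) = 0 := hharm
  set c : ℝ := 1 / (2 - (N : ℝ) - 2 * h) with hc
  set S : MvPolynomial (Fin N) ℝ := ∑ i : Fin N, X i ^ 2 with hS
  set Q : MvPolynomial (Fin N) ℝ := pderiv j P with hQ
  have hQhom : Q.IsHomogeneous (h - 1) := my_pderiv_isHomogeneous hhom j
  have hQharm : ∑ i : Fin N, pderiv i (pderiv i Q) = 0 := by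
    have key : ∑ i : Fin N, pderiv i (pderiv i (pderiv j P)) =
        pderiv j (∑ i : Fin N, pderiv i (pderiv i P)) := by
      rw [map_sum]
      refine Finset.sum_congr rfl fun i _ => ?_
      rw [my_pderiv_comm i j P, my_pderiv_comm i j (pderiv i P)]
    rw [hQ, key, hharm', map_zero]
  have hQ0 : h = 0 → Q = 0 := by
    intro h0
    subst h0
    rw [hQ]
    conv_lhs => rw [← P.support_sum_monomial_coeff]
    rw [map_sum]
    refine Finset.sum_eq_zero fun d hd => ?_
    have hdeg : d.degree = 0 := by
      rw [Finsupp.degree_eq_weight_one]; exact hhom (Finsupp.mem_support_iff.mp hd)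
    have hd0 : d = 0 := (Finsupp.degree_eq_zero_iff d).mp hdeg
    rw [pderiv_monomial, hd0]
    simp
  have hShom : S.IsHomogeneous 2 := by
    rw [hS]
    exact IsHomogeneous.sum _ _ _ fun i _ => isHomogeneous_X_pow i 2
  -- Laplacian of X j * P
  have h1 : ∑ i : Fin N, pderiv i (pderiv i (X j * P)) = 2 * Q := by
    have e1 : ∀ i : Fin N, pderiv i (pderiv i (X j * P)) =
        2 * (pderiv i (X j) * pderiv i P) + X j * pderiv i (pderiv i P) := by
      intro i
      rw [lap_mul]
      have hXX : pderiv i (pderiv i (X j : MvPolynomial (Fin N) ℝ)) = 0 := by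
        by_cases hij : i = j
        · subst hij; rw [pderiv_X_self]; exact pderiv_one
        · rw [pderiv_X_of_ne (Ne.symm hij), map_zero]
      rw [hXX, zero_mul, zero_add]
    simp_rw [e1]
    rw [Finset.sum_add_distrib, ← Finset.mul_sum, ← Finset.mul_sum, hharm', mul_zero, add_zero]
    refine congrArg (2 * ·) ?_
    rw [Finset.sum_eq_single j]
    · rw [pderiv_X_self, one_mul, hQ]
    · intro k _ hk
      rw [pderiv_X_of_ne (Ne.symm hk), zero_mul]
    · simp
  refine ⟨⟨hQhom, hQ0, hQharm⟩, ?_, ?_⟩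
  · -- homogeneity of degree h+1
    apply IsHomogeneous.add
    · have := (isHomogeneous_X ℝ j).mul hhom
      rwa [Nat.add_comm] at this
    · rcases Nat.eq_zero_or_pos h with h0 | hpos
      · rw [hQ0 h0, mul_zero]; exact isHomogeneous_zero _ _ _
      · have hmul := (hShom.C_mul c).mul hQhom
        have : 2 + (h - 1) = h + 1 := by omega
        rwa [this] at hmul
  · -- harmonicity
    show ∑ i : Fin N, pderiv i (pderiv i (X j * P + C c * S * Q)) = 0
    simp only [map_add, Finset.sum_add_distrib]
    rw [h1]
    rcases Nat.eq_zero_or_pos h with h0 | hpos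
    · rw [hQ0 h0]
      simp
    · have h2 : ∑ i : Fin N, pderiv i (pderiv i (C c * S * Q)) =
          C c * (C (2 * N : ℝ) * Q + C (4 * ((h : ℝ) - 1)) * Q) := by
        have e2 : ∀ i : Fin N, pderiv i (pderiv i (C c * S * Q)) =
            C c * (2 * Q + 2 * (2 * X i * pderiv i Q) + S * pderiv i (pderiv i Q)) := by
          intro i
          have hC2 : (C (2 : ℝ) : MvPolynomial (Fin N) ℝ) = 2 := map_ofNat C 2
          have hSi : pderiv i S = 2 * X i := by rw [hS]; exact pderiv_sq_sum i
          have hSS : pderiv i (pderiv i S) = 2 := by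
            rw [hSi, ← hC2, pderiv_C_mul, pderiv_X_self, mul_one, hC2]
          rw [mul_assoc, pderiv_C_mul, pderiv_C_mul, lap_mul, hSS, hSi]
        simp_rw [e2]
        rw [← Finset.mul_sum]
        congr 1
        rw [Finset.sum_add_distrib, Finset.sum_add_distrib]
        have h3 : (∑ x : Fin N, S * pderiv x (pderiv x Q)) = 0 := by
          rw [← Finset.mul_sum, hQharm, mul_zero]
        rw [h3, add_zero, Finset.sum_const, Finset.card_univ, Fintype.card_fin]
        have heuler : ∑ i : Fin N, X i * pderiv i Q = ((h - 1 : ℕ) : ℝ) • Q :=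
          my_euler hQhom
        have hsum2 : ∑ i : Fin N, 2 * (2 * X i * pderiv i Q) =
            C (4 * ((h : ℝ) - 1)) * Q := by
          have : ∑ i : Fin N, 2 * (2 * X i * pderiv i Q) =
              4 * ∑ i : Fin N, X i * pderiv i Q := by
            rw [Finset.mul_sum]; refine Finset.sum_congr rfl fun i _ => by ring
          rw [this, heuler, smul_eq_C_mul]
          have hcast : ((h - 1 : ℕ) : ℝ) = (h : ℝ) - 1 := by
            rw [Nat.cast_sub hpos, Nat.cast_one]
          rw [hcast, map_mul, show (C (4 : ℝ) : MvPolynomial (Fin N) ℝ) = 4 from map_ofNat C 4]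
          ring
        rw [hsum2]
        congr 1
        have hCN : (C ((2 : ℝ) * N) : MvPolynomial (Fin N) ℝ)
            = 2 * (N : MvPolynomial (Fin N) ℝ) := by
          rw [map_mul, map_natCast, map_ofNat]
        rw [hCN, nsmul_eq_mul]
        ring
      rw [h2]
      have hden : (2 : ℝ) - N - 2 * h ≠ 0 := by
        intro h'
        apply hNh
        have : (N : ℝ) + 2 * h = 2 := by linarith
        exact_mod_cast this
      have hscal : (2 : ℝ) + c * (2 * N + 4 * ((h : ℝ) - 1)) = 0 := by
        rw [hc]
        field_simp
        ring
      have hfactor : (2 : MvPolynomial (Fin N) ℝ) * Q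
          + C c * (C (2 * N : ℝ) * Q + C (4 * ((h : ℝ) - 1)) * Q)
          = C ((2 : ℝ) + c * (2 * (N : ℝ) + 4 * ((h : ℝ) - 1))) * Q := by
        simp only [map_add, map_mul, map_ofNat, map_natCast]
        ring
      rw [hfactor, hscal, map_zero, zero_mul]
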